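/- Let R be a commutative ring of characteristic p > 0 and q = p^e. If D : R → R is a differential operator of order at most q − 1 with D(1) = 0, then D vanishes on R^q, i.e., D(x^q) = 0 for all x ∈ R. -/

import Mathlib

/-- `IsDiffOp R n D` : `D` is an (absolute) differential operator of `R` of order at most `n`,
defined inductively: order `≤ 0` means `R`-linear, and `D` has order `≤ n+1` if all the
commutators `[D, mulLeft r]` have order `≤ n`.  (For commutative rings this agrees with the
definition via the left `R`-linear extension of `D` to `R ⊗ R` annihilating `T_R^{n+1}`.) -/
def IsDiffOp (R : Type*) [CommRing R] : ℕ → (R →+ R) → Prop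
  | 0, D => ∀ r s : R, D (r * s) = r * D s
  | n + 1, D => ∀ r : R,
      IsDiffOp R n ((D.comp (AddMonoidHom.mulLeft r)) - ((AddMonoidHom.mulLeft r).comp D))


section Aux

variable {R : Type*} [CommRing R]

private def rmul (A : AddMonoid.End R) : AddMonoid.End (AddMonoid.End R) :=
  AddMonoidHom.mulRight (R := AddMonoid.End R) A

private def lmul (A : AddMonoid.End R) : AddMonoid.End (AddMonoid.End R) :=
  AddMonoidHom.mulLeft (R := AddMonoid.End R) A

private lemma rmul_apply (A f : AddMonoid.End R) : rmul A f = f * A := rfl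
private lemma lmul_apply (A f : AddMonoid.End R) : lmul A f = A * f := rfl

private lemma adIter_eq_zero (n : ℕ) (D : R →+ R) (hD : IsDiffOp R n D) (r : R) :
    ((rmul (AddMonoidHom.mulLeft r) - lmul (AddMonoidHom.mulLeft r)) ^ (n + 1))
      (D : AddMonoid.End R) = 0 := by
  induction n generalizing D with
  | zero =>
    refine DFunLike.ext _ _ fun s => ?_
    rw [pow_one]
    show (rmul _ D - lmul _ D) s = (0 : AddMonoid.End R) s
    erw [rmul_apply, lmul_apply]
    show D (r * s) - r * D s = 0
    rw [hD r s, sub_self]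
  | succ n ih =>
    rw [pow_succ]
    show ((rmul (AddMonoidHom.mulLeft r) - lmul (AddMonoidHom.mulLeft r)) ^ (n + 1))
      ((rmul (AddMonoidHom.mulLeft r) - lmul (AddMonoidHom.mulLeft r)) D) = 0
    have h1 : (rmul (AddMonoidHom.mulLeft r) - lmul (AddMonoidHom.mulLeft r)) (D : AddMonoid.End R)
        = ((D.comp (AddMonoidHom.mulLeft r)) - ((AddMonoidHom.mulLeft r).comp D)) := rfl
    rw [h1]
    exact ih _ (hD r)

private lemma rmul_pow_apply (A : AddMonoid.End R) (m : ℕ) (f : AddMonoid.End R) :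
    (rmul A ^ m) f = f * A ^ m := by
  induction m generalizing f with
  | zero => simp [AddMonoid.End.one_apply]
  | succ m ih =>
    rw [pow_succ]
    show (rmul A ^ m) (rmul A f) = f * (A ^ m * A)
    rw [rmul_apply, ih, mul_assoc, ← pow_succ', pow_succ]

private lemma lmul_pow_apply (A : AddMonoid.End R) (m : ℕ) (f : AddMonoid.End R) :
    (lmul A ^ m) f = A ^ m * f := by
  induction m generalizing f with
  | zero => simp [AddMonoid.End.one_apply]
  | succ m ih =>
    rw [pow_succ']
    show lmul A ((lmul A ^ m) f) = A ^ (m + 1) * f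
    rw [ih, lmul_apply, ← mul_assoc, ← pow_succ']

private lemma pow_apply_one (A : AddMonoid.End R) (r : R) (h : A = AddMonoidHom.mulLeft r)
    (m : ℕ) : (A ^ m) 1 = r ^ m := by
  induction m with
  | zero => simp [AddMonoid.End.one_apply]
  | succ m ih =>
    rw [pow_succ']
    show A ((A ^ m) 1) = r ^ (m + 1)
    rw [ih, h]
    show r * r ^ m = r ^ (m + 1)
    rw [pow_succ']

end Aux

/-- A differential operator of order at most `q - 1` annihilating `1` vanishes on `q`-th
powers, where `q = p ^ e` and `R` has characteristic `p > 0`. -/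
theorem diffOp_plus_vanishes_on_pow_q
    (R : Type*) [CommRing R] (p : ℕ) [Fact p.Prime] [CharP R p]
    (e q : ℕ) (hq : q = p ^ e) (D : R →+ R) (hD : IsDiffOp R (q - 1) D)
    (hD1 : D 1 = 0) (x : R) : D (x ^ q) = 0 := by
  have hq1 : 1 ≤ q := hq ▸ Nat.one_le_pow _ _ (Fact.out : p.Prime).pos
  have key := adIter_eq_zero (q - 1) D hD x
  rw [Nat.sub_add_cancel hq1] at key
  haveI : CharP (AddMonoid.End (AddMonoid.End R)) p := by
    constructor
    intro n
    constructor
    · intro h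
      have h2 := congrArg (fun f : AddMonoid.End (AddMonoid.End R) =>
        ((f (1 : AddMonoid.End R)) : R →+ R) 1) h
      simp only [AddMonoid.End.natCast_apply, AddMonoid.End.zero_apply] at h2
      rw [← CharP.cast_eq_zero_iff R p n]
      have h3 : ((n • (1 : AddMonoid.End R) : AddMonoid.End R) : R →+ R) 1 = (n : R) := by
        show n • ((1 : AddMonoid.End R) 1) = (n : R)
        rw [AddMonoid.End.one_apply, nsmul_eq_mul, mul_one]
      rw [h3] at h2
      simpa using h2
    · intro h
      refine DFunLike.ext _ _ fun f => ?_
      rw [AddMonoid.End.natCast_apply, AddMonoid.End.zero_apply]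
      refine DFunLike.ext _ _ fun y => ?_
      show n • (f y) = (0 : AddMonoid.End R) y
      rw [AddMonoid.End.zero_apply, nsmul_eq_mul, (CharP.cast_eq_zero_iff R p n).mpr h, zero_mul]
  set A : AddMonoid.End R := (AddMonoidHom.mulLeft x : R →+ R) with hA
  have hcomm : Commute (rmul A) (lmul A) := by
    refine DFunLike.ext _ _ fun f => ?_
    show rmul A (lmul A f) = lmul A (rmul A f)
    rw [rmul_apply, lmul_apply, rmul_apply, lmul_apply, mul_assoc]
  rw [hq, sub_pow_char_pow_of_commute _ _ hcomm] at key
  have h4 : (rmul A ^ p ^ e) (D : AddMonoid.End R) - (lmul A ^ p ^ e) D = 0 := key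
  have key2 := sub_eq_zero.mp h4
  erw [rmul_pow_apply, lmul_pow_apply] at key2
  have h5 : D ((A ^ p ^ e) 1) = (A ^ p ^ e) (D 1) :=
    congrArg (fun f : AddMonoid.End R => f 1) key2
  rw [hD1, map_zero, pow_apply_one A x hA] at h5
  rw [hq]
  exact h5
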